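/- (Spline knots upper bound of ReLU-MLP, layer recurrence) Let f : ℝ → ℝ be continuous and piecewise affine with at most m breakpoints, and let n ∈ ℕ, w_i, a_i, b_i ∈ ℝ for i = 1,…,n. Then the next-layer output F(x) = Σ_{i=1}^n w_i·max(a_i·f(x) + b_i, 0) is piecewise affine with at most m + n·(m + 1) breakpoints: each neuron preserves at most the m breakpoints of the previous layer and generates at most m + 1 new knots. -/
import Mathlib


/-- `f : ℝ → ℝ` is piecewise affine with breakpoint set `E` if on every open
interval (open order-connected set) disjoint from `E` it agrees with an affine map. -/
def PiecewiseAffine (f : ℝ → ℝ) (E : Set ℝ) : Prop :=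
  ∀ I : Set ℝ, IsOpen I → I.OrdConnected → I ∩ E = ∅ →
    ∃ a b : ℝ, ∀ x ∈ I, f x = a * x + b

namespace ReluAux

open Set

/-- the component of `ℝ \ E` containing `x` -/
def comp (E : Finset ℝ) (x : ℝ) : Set ℝ :=
  ⋂ e ∈ E, {y : ℝ | (e < x → e < y) ∧ (x < e → y < e)}

lemma mem_comp_iff {E : Finset ℝ} {x y : ℝ} :
    y ∈ comp E x ↔ ∀ e ∈ E, (e < x → e < y) ∧ (x < e → y < e) := by
  simp [comp]

lemma self_mem_comp (E : Finset ℝ) (x : ℝ) : x ∈ comp E x := by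
  rw [mem_comp_iff]; exact fun e _ => ⟨id, id⟩

lemma isOpen_comp (E : Finset ℝ) (x : ℝ) (hx : x ∉ E) : IsOpen (comp E x) := by
  refine isOpen_biInter_finset (fun e he => ?_)
  rcases lt_trichotomy e x with h | h | h
  · have : {y : ℝ | (e < x → e < y) ∧ (x < e → y < e)} = Ioi e := by
      ext y; simp [h, not_lt.2 h.le, lt_asymm h]
    rw [this]; exact isOpen_Ioi
  · exact absurd (h ▸ he) hx
  · have : {y : ℝ | (e < x → e < y) ∧ (x < e → y < e)} = Iio e := by
      ext y; simp [h, lt_asymm h]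
    rw [this]; exact isOpen_Iio

lemma ordConnected_comp (E : Finset ℝ) (x : ℝ) : (comp E x).OrdConnected := by
  refine Set.ordConnected_biInter (fun e _ => ?_)
  constructor
  intro y hy z hz t ht
  constructor
  · intro h; exact lt_of_lt_of_le (hy.1 h) ht.1
  · intro h; exact lt_of_le_of_lt ht.2 (hz.2 h)

lemma comp_disjoint (E : Finset ℝ) (x : ℝ) (hx : x ∉ E) : comp E x ∩ ↑E = ∅ := by
  ext e
  simp only [mem_inter_iff, Finset.mem_coe, mem_empty_iff_false, iff_false, not_and]
  intro he he'
  rw [mem_comp_iff] at he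
  rcases lt_trichotomy e x with h | h | h
  · exact absurd ((he e he').1 h) (lt_irrefl e)
  · exact hx (h ▸ he')
  · exact absurd ((he e he').2 h) (lt_irrefl e)

lemma subset_comp {E : Finset ℝ} {I : Set ℝ} (hoc : I.OrdConnected)
    (hdisj : I ∩ ↑E = ∅) {x : ℝ} (hx : x ∈ I) : I ⊆ comp E x := by
  intro y hy
  rw [mem_comp_iff]
  intro e he
  have heI : e ∉ I := fun h =>
    Set.eq_empty_iff_forall_notMem.1 hdisj e ⟨h, he⟩
  constructor
  · intro h
    by_contra h'
    exact heI (hoc.out hy hx ⟨not_lt.1 h', h.le⟩)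
  · intro h
    by_contra h'
    exact heI (hoc.out hx hy ⟨h.le, not_lt.1 h'⟩)

lemma comp_eq_of_iff {E : Finset ℝ} {x y : ℝ}
    (h : ∀ e ∈ E, e < x ↔ e < y) (hx : x ∉ E) (hy : y ∉ E) :
    comp E x = comp E y := by
  ext z
  rw [mem_comp_iff, mem_comp_iff]
  refine forall₂_congr (fun e he => ?_)
  have hxe : x < e ↔ y < e := by
    constructor
    · intro h'
      rcases lt_trichotomy y e with h'' | h'' | h''
      · exact h''
      · exact absurd (h'' ▸ he) hy
      · exact absurd ((h e he).2 h'') (lt_asymm h')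
    · intro h'
      rcases lt_trichotomy x e with h'' | h'' | h''
      · exact h''
      · exact absurd (h'' ▸ he) hx
      · exact absurd ((h e he).1 h'') (lt_asymm h')
  rw [h e he, hxe]

lemma comp_eq_of_card {E : Finset ℝ} {x y : ℝ} (hx : x ∉ E) (hy : y ∉ E)
    (h : (E.filter (· < x)).card = (E.filter (· < y)).card) :
    comp E x = comp E y := by
  have key : E.filter (· < x) = E.filter (· < y) := by
    rcases le_total x y with hxy | hxy
    · refine Finset.eq_of_subset_of_card_le (fun e he => ?_) h.ge
      rw [Finset.mem_filter] at he ⊢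
      exact ⟨he.1, lt_of_lt_of_le he.2 hxy⟩
    · refine (Finset.eq_of_subset_of_card_le (fun e he => ?_) h.le).symm
      rw [Finset.mem_filter] at he ⊢
      exact ⟨he.1, lt_of_lt_of_le he.2 hxy⟩
  refine comp_eq_of_iff (fun e he => ?_) hx hy
  constructor
  · intro h'
    have h1 : e ∈ E.filter (· < x) := Finset.mem_filter.2 ⟨he, h'⟩
    rw [key] at h1
    exact (Finset.mem_filter.1 h1).2
  · intro h'
    have h1 : e ∈ E.filter (· < y) := Finset.mem_filter.2 ⟨he, h'⟩
    rw [← key] at h1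
    exact (Finset.mem_filter.1 h1).2

lemma pa_mono {f : ℝ → ℝ} {S T : Set ℝ} (hST : S ⊆ T) (h : PiecewiseAffine f S) :
    PiecewiseAffine f T := by
  intro I hI hoc hd
  exact h I hI hoc (Set.eq_empty_of_subset_empty
    (hd ▸ Set.inter_subset_inter_right I hST))

lemma pa_add {f g : ℝ → ℝ} {S T : Set ℝ} (hf : PiecewiseAffine f S)
    (hg : PiecewiseAffine g T) :
    PiecewiseAffine (fun x => f x + g x) (S ∪ T) := by
  intro I hI hoc hd
  rw [Set.inter_union_distrib_left] at hd
  obtain ⟨a1, b1, h1⟩ := hf I hI hoc (Set.eq_empty_of_subset_empty (hd ▸ Set.subset_union_left))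
  obtain ⟨a2, b2, h2⟩ := hg I hI hoc (Set.eq_empty_of_subset_empty (hd ▸ Set.subset_union_right))
  exact ⟨a1 + a2, b1 + b2, fun x hx => by dsimp only; rw [h1 x hx, h2 x hx]; ring⟩

lemma pa_smul {g : ℝ → ℝ} {S : Set ℝ} (w : ℝ) (hg : PiecewiseAffine g S) :
    PiecewiseAffine (fun x => w * g x) S := by
  intro I hI hoc hd
  obtain ⟨a1, b1, h1⟩ := hg I hI hoc hd
  exact ⟨w * a1, w * b1, fun x hx => by dsimp only; rw [h1 x hx]; ring⟩

lemma neuron (f : ℝ → ℝ) (E : Finset ℝ) (hpa : PiecewiseAffine f ↑E) (a b : ℝ) :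
    ∃ K : Finset ℝ, K.card ≤ E.card + 1 ∧
      PiecewiseAffine (fun x => max (a * f x + b) 0) (↑E ∪ ↑K) := by
  classical
  -- choose an affine representative for every set that admits one
  have hrep : ∀ S : Set ℝ, ∃ p : ℝ × ℝ,
      (∃ u v : ℝ, ∀ y ∈ S, f y = u * y + v) → ∀ y ∈ S, f y = p.1 * y + p.2 := by
    intro S
    by_cases h : ∃ u v : ℝ, ∀ y ∈ S, f y = u * y + v
    · obtain ⟨u, v, huv⟩ := h
      exact ⟨(u, v), fun _ => huv⟩
    · exact ⟨(0, 0), fun h' => absurd h' h⟩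
  choose r hr using hrep
  -- affine reps exist on each component
  have hcompa : ∀ x : ℝ, x ∉ E → ∀ y ∈ comp E x, f y = (r (comp E x)).1 * y + (r (comp E x)).2 := by
    intro x hx
    exact hr (comp E x) (hpa (comp E x) (isOpen_comp E x hx)
      (ordConnected_comp E x) (comp_disjoint E x hx))
  -- the knot function
  set knot : ℕ → ℝ := fun j =>
    if h : ∃ x : ℝ, x ∉ E ∧ (E.filter (· < x)).card = j then
      let p := r (comp E h.choose)
      if a * p.1 = 0 then 0 else -(a * p.2 + b) / (a * p.1)
    else 0 with hknot
  refine ⟨(Finset.range (E.card + 1)).image knot,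
    le_trans (Finset.card_image_le) (by simp), ?_⟩
  intro I hIopen hIoc hIdisj
  rcases I.eq_empty_or_nonempty with h | ⟨x₀, hx₀⟩
  · exact ⟨0, 0, fun x hx => absurd hx (h ▸ notMem_empty x)⟩
  rw [Set.inter_union_distrib_left] at hIdisj
  have hd1 : I ∩ ↑E = ∅ := Set.eq_empty_of_subset_empty (hIdisj ▸ Set.subset_union_left)
  have hd2 : I ∩ ↑((Finset.range (E.card + 1)).image knot) = ∅ :=
    Set.eq_empty_of_subset_empty (hIdisj ▸ Set.subset_union_right)
  have hx₀E : x₀ ∉ E := fun h =>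
    Set.eq_empty_iff_forall_notMem.1 hd1 x₀ ⟨hx₀, h⟩
  have hsub : I ⊆ comp E x₀ := subset_comp hIoc hd1 hx₀
  set p := r (comp E x₀) with hp
  set c := a * p.1 with hc
  set d := a * p.2 + b with hd
  have hval : ∀ y ∈ I, a * f y + b = c * y + d := by
    intro y hy
    rw [hcompa x₀ hx₀E y (hsub hy)]; ring
  by_cases hc0 : c = 0
  · refine ⟨0, max d 0, fun y hy => ?_⟩
    dsimp only
    rw [hval y hy, hc0]; simp only [zero_mul, zero_add]
  -- the knot lies in K
  have hknotK : -d / c ∈ (Finset.range (E.card + 1)).image knot := by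
    refine Finset.mem_image.2 ⟨(E.filter (· < x₀)).card, ?_, ?_⟩
    · exact Finset.mem_range.2 (Nat.lt_succ_of_le (Finset.card_le_card (Finset.filter_subset _ _)))
    · have hex : ∃ x : ℝ, x ∉ E ∧ (E.filter (· < x)).card = (E.filter (· < x₀)).card :=
        ⟨x₀, hx₀E, rfl⟩
      have hcc : comp E hex.choose = comp E x₀ :=
        comp_eq_of_card hex.choose_spec.1 hx₀E hex.choose_spec.2
      rw [hknot]
      simp only [hex, dif_pos]
      rw [hcc, ← hp, ← hc, ← hd, if_neg hc0]
  have hknotI : -d / c ∉ I := fun h =>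
    Set.eq_empty_iff_forall_notMem.1 hd2 _ ⟨h, hknotK⟩
  -- I lies entirely on one side of the knot
  have hside : (∀ y ∈ I, y < -d / c) ∨ (∀ y ∈ I, -d / c < y) := by
    by_cases H : ∀ y ∈ I, y < -d / c
    · exact Or.inl H
    · push_neg at H
      obtain ⟨y₁, hy₁, hy₁'⟩ := H
      refine Or.inr (fun y hy => ?_)
      by_contra h'
      push_neg at h'
      exact hknotI (hIoc.out hy hy₁ ⟨h', hy₁'⟩)
  have hzero : c * (-d / c) + d = 0 := by field_simp; ring
  rcases hside with H | H
  · rcases lt_or_gt_of_ne hc0 with hcneg | hcpos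
    · -- c < 0, y < knot → c*y + d > 0
      refine ⟨c, d, fun y hy => ?_⟩
      dsimp only
      rw [hval y hy]
      refine max_eq_left ?_
      nlinarith [H y hy]
    · refine ⟨0, 0, fun y hy => ?_⟩
      dsimp only
      rw [hval y hy]
      simp only [zero_mul, zero_add]
      refine max_eq_right ?_
      nlinarith [H y hy]
  · rcases lt_or_gt_of_ne hc0 with hcneg | hcpos
    · refine ⟨0, 0, fun y hy => ?_⟩
      dsimp only
      rw [hval y hy]
      simp only [zero_mul, zero_add]
      refine max_eq_right ?_
      nlinarith [H y hy]
    · refine ⟨c, d, fun y hy => ?_⟩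
      dsimp only
      rw [hval y hy]
      refine max_eq_left ?_
      nlinarith [H y hy]


end ReluAux

/-- Layer recurrence for the spline-knot upper bound of a ReLU MLP: feeding a
continuous piecewise affine function with at most `m` breakpoints through a
ReLU layer with `n` neurons yields at most `m + n*(m+1)` breakpoints. -/
theorem relu_mlp_layer_knot_recurrence
    (f : ℝ → ℝ) (hf : Continuous f) (m : ℕ) (E : Finset ℝ)
    (hEc : E.card ≤ m) (hpa : PiecewiseAffine f ↑E)
    (n : ℕ) (w a b : Fin n → ℝ) :
    ∃ E' : Finset ℝ, E'.card ≤ m + n * (m + 1) ∧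
      PiecewiseAffine (fun x : ℝ => ∑ i, w i * max (a i * f x + b i) 0) ↑E' := by
  classical
  have key : ∀ s : Finset (Fin n), ∃ E' : Finset ℝ, E ⊆ E' ∧
      E'.card ≤ E.card + s.card * (E.card + 1) ∧
      PiecewiseAffine (fun x : ℝ => ∑ i ∈ s, w i * max (a i * f x + b i) 0) ↑E' := by
    intro s
    induction s using Finset.induction_on with
    | empty =>
        refine ⟨E, Finset.Subset.refl E, by simp, ?_⟩
        intro I _ _ _
        exact ⟨0, 0, fun x hx => by simp⟩
    | @insert i s hi ih =>
        obtain ⟨E', hsub, hcard, hpa'⟩ := ih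
        obtain ⟨K, hKcard, hKpa⟩ := ReluAux.neuron f E hpa (a i) (b i)
        refine ⟨E' ∪ K, hsub.trans Finset.subset_union_left, ?_, ?_⟩
        · calc (E' ∪ K).card ≤ E'.card + K.card := Finset.card_union_le E' K
            _ ≤ (E.card + s.card * (E.card + 1)) + (E.card + 1) := by
                exact Nat.add_le_add hcard hKcard
            _ = E.card + (s.card + 1) * (E.card + 1) := by ring
            _ = E.card + (insert i s).card * (E.card + 1) := by
                rw [Finset.card_insert_of_notMem hi]
        · have h1 : PiecewiseAffine
              (fun x : ℝ => w i * max (a i * f x + b i) 0) (↑E ∪ ↑K) :=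
            ReluAux.pa_smul (w i) hKpa
          have h2 := ReluAux.pa_add h1 hpa'
          have hss : (↑E ∪ ↑K : Set ℝ) ∪ ↑E' ⊆ ↑(E' ∪ K) := by
            rw [Finset.coe_union]
            intro x hx
            rcases hx with (hx | hx) | hx
            · exact Or.inl (hsub hx)
            · exact Or.inr hx
            · exact Or.inl hx
          have h3 := ReluAux.pa_mono hss h2
          intro I hI hoc hd
          obtain ⟨u, v, huv⟩ := h3 I hI hoc hd
          refine ⟨u, v, fun x hx => ?_⟩
          dsimp only
          rw [Finset.sum_insert hi]
          exact huv x hx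
  obtain ⟨E', _, hcard, hpa'⟩ := key (Finset.univ : Finset (Fin n))
  refine ⟨E', ?_, ?_⟩
  · refine hcard.trans ?_
    have h1 : (Finset.univ : Finset (Fin n)).card * (E.card + 1) ≤ n * (m + 1) := by
      rw [Finset.card_univ, Fintype.card_fin]
      exact Nat.mul_le_mul_left n (Nat.add_le_add_right hEc 1)
    exact Nat.add_le_add hEc h1
  · exact hpa'
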